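/- Let f : ℝ^K → [0, ∞) be a probability density with respect to Lebesgue measure, let p : ℝ^K → (0, 1) be measurable, and set c = ∫ p f dλ, so 0 < c < 1. Let μ be the joint probability measure on ℝ^K × {0,1} of the pair (θ, Y) where θ has density f and, conditionally on θ, Y is Bernoulli with success probability p(θ); let ν be the product of the two marginals of μ, i.e., ν = (f dλ) ⊗ Bernoulli(c). Assume the integral I = ∫_{ℝ^K} f(θ) [ p(θ) log(p(θ)/c) + (1 − p(θ)) log((1 − p(θ))/(1 − c)) ] dθ is finite. Then μ is absolutely continuous with respect to ν and the Kullback–Leibler divergence KL(μ ‖ ν) equals I. -/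

import Mathlib

open MeasureTheory
open scoped ENNReal NNReal


lemma aux_prod_smul {α β : Type*} [MeasurableSpace α] [MeasurableSpace β]
    (μ : Measure α) (ν : Measure β) [SFinite ν] (a : ℝ≥0∞) :
    μ.prod (a • ν) = a • μ.prod ν := by
  ext s hs
  rw [Measure.prod_apply hs, Measure.smul_apply, Measure.prod_apply hs, smul_eq_mul,
    ← lintegral_const_mul a (measurable_measure_prodMk_left hs)]
  simp

lemma aux_withDensity_map {α β : Type*} [MeasurableSpace α] [MeasurableSpace β]
    {h : α → β} (hh : Measurable h) (m : Measure α) {g : β → ℝ≥0∞} (hg : Measurable g) :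
    (Measure.map h m).withDensity g = Measure.map h (m.withDensity fun x => g (h x)) := by
  ext s hs
  rw [withDensity_apply _ hs, setLIntegral_map hs hg hh, Measure.map_apply hh hs,
    withDensity_apply _ (hh hs)]

lemma aux_mul_log_lb {x c : ℝ} (hx0 : 0 < x) (hx1 : x ≤ 1) (hc : 0 < c) :
    -(1 + |Real.log c|) ≤ x * Real.log (x / c) := by
  have h1 : 1 - x⁻¹ ≤ Real.log x := Real.one_sub_inv_le_log_of_pos hx0
  have h2 : x - 1 ≤ x * Real.log x := by
    nlinarith [mul_inv_cancel₀ hx0.ne', hx0.le]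
  rw [Real.log_div hx0.ne' hc.ne']
  nlinarith [neg_abs_le (Real.log c), le_abs_self (Real.log c), abs_nonneg (Real.log c)]

/-- The Bernoulli measure on `{0,1}` (encoded as `Bool`) with success probability `c`:
mass `c` at `true` (i.e. `1`) and `1 − c` at `false` (i.e. `0`). -/
noncomputable def bernoulliMeasure (c : ℝ) : Measure Bool :=
  ENNReal.ofReal c • Measure.dirac true + ENNReal.ofReal (1 - c) • Measure.dirac false

/-- **mutual information of a latent trait and a probit response.**
Let `f` be a probability density on `ℝ^K`, `p : ℝ^K → (0,1)` measurable, `c = ∫ p f dλ` with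
`0 < c < 1`. Let `μ` be the joint law of `(θ, Y)` where `θ` has density `f` and
`Y | θ ~ Bernoulli(p(θ))`, and let `ν` be the product of the two marginals of `μ`,
`ν = (f dλ) ⊗ Bernoulli(c)`. If
`I = ∫ f(θ) [p(θ) log(p(θ)/c) + (1 − p(θ)) log((1 − p(θ))/(1 − c))] dθ` is finite, then
`μ ≪ ν` and `KL(μ ‖ ν) = ∫ log(dμ/dν) dμ = I`. -/
theorem mutual_information_bernoulli (K : ℕ) (f p : (Fin K → ℝ) → ℝ)
    (hf_meas : Measurable f) (hp_meas : Measurable p)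
    (hf_nonneg : ∀ θ, 0 ≤ f θ) (hf_prob : ∫ θ, f θ = 1)
    (hp : ∀ θ, 0 < p θ ∧ p θ < 1)
    (c : ℝ) (hc : c = ∫ θ, p θ * f θ) (hc01 : 0 < c ∧ c < 1)
    (μ ν : Measure ((Fin K → ℝ) × Bool))
    (hμ : μ =
      Measure.map (fun θ => (θ, true))
          (volume.withDensity fun θ => ENNReal.ofReal (f θ * p θ)) +
        Measure.map (fun θ => (θ, false))
          (volume.withDensity fun θ => ENNReal.ofReal (f θ * (1 - p θ))))
    (hν : ν = (volume.withDensity fun θ => ENNReal.ofReal (f θ)).prod (bernoulliMeasure c))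
    (hI : Integrable (fun θ =>
      f θ * (p θ * Real.log (p θ / c) + (1 - p θ) * Real.log ((1 - p θ) / (1 - c))))) :
    μ ≪ ν ∧
    ∫ x, Real.log ((μ.rnDeriv ν x).toReal) ∂μ =
      ∫ θ, f θ * (p θ * Real.log (p θ / c) +
        (1 - p θ) * Real.log ((1 - p θ) / (1 - c))) := by
  obtain ⟨hc0, hc1⟩ := hc01
  have hc1' : (0:ℝ) < 1 - c := by linarith
  have hf_int : Integrable f := by
    by_contra h
    rw [integral_undef h] at hf_prob
    exact one_ne_zero hf_prob.symm
  set mf := volume.withDensity (fun θ => ENNReal.ofReal (f θ)) with hmf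
  haveI : IsFiniteMeasure mf := by
    constructor
    rw [hmf, withDensity_apply _ MeasurableSet.univ, Measure.restrict_univ,
      ← ofReal_integral_eq_lintegral_ofReal hf_int (ae_of_all _ hf_nonneg)]
    exact ENNReal.ofReal_lt_top
  haveI : IsFiniteMeasure (bernoulliMeasure c) := by
    constructor
    simp [bernoulliMeasure]
  haveI : IsFiniteMeasure ν := by rw [hν]; infer_instance
  -- the candidate density
  set g : ((Fin K → ℝ) × Bool) → ℝ≥0∞ :=
    fun x => ENNReal.ofReal (if x.2 then p x.1 / c else (1 - p x.1) / (1 - c)) with hg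
  have hg_meas : Measurable g := by
    apply ENNReal.measurable_ofReal.comp
    apply Measurable.ite (p := fun x : (Fin K → ℝ) × Bool => x.2 = true)
    · exact measurable_snd (measurableSet_singleton true)
    · exact (hp_meas.comp measurable_fst).div_const c
    · exact ((measurable_const.sub (hp_meas.comp measurable_fst))).div_const (1 - c)
  -- decompose ν
  have hν' : ν = ENNReal.ofReal c • Measure.map (fun θ => (θ, true)) mf +
      ENNReal.ofReal (1 - c) • Measure.map (fun θ => (θ, false)) mf := by
    rw [hν, bernoulliMeasure, Measure.prod_add, aux_prod_smul, aux_prod_smul,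
      Measure.prod_dirac, Measure.prod_dirac]
  -- μ = ν.withDensity g
  have hgt : (fun θ => g (θ, true)) = fun θ => ENNReal.ofReal (p θ / c) := rfl
  have hgf : (fun θ => g (θ, false)) = fun θ => ENNReal.ofReal ((1 - p θ) / (1 - c)) := rfl
  have hμν : μ = ν.withDensity g := by
    rw [hν', withDensity_add_measure, withDensity_smul_measure, withDensity_smul_measure,
      aux_withDensity_map (measurable_prodMk_right) mf hg_meas,
      aux_withDensity_map (measurable_prodMk_right) mf hg_meas,
      hgt, hgf, ← Measure.map_smul, ← Measure.map_smul, hμ]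
    congr 1
    · congr 1
      rw [← withDensity_smul _ ((hp_meas.div_const c).ennreal_ofReal)]
      have : (ENNReal.ofReal c • fun θ => ENNReal.ofReal (p θ / c)) =
          fun θ => ENNReal.ofReal (p θ) := by
        funext θ
        simp only [Pi.smul_apply, smul_eq_mul, ← ENNReal.ofReal_mul hc0.le]
        rw [mul_comm c, div_mul_cancel₀ _ hc0.ne']
      rw [this, hmf, ← withDensity_mul _ (hf_meas.ennreal_ofReal)
        (hp_meas.ennreal_ofReal)]
      congr 1
      funext θ
      simp [ENNReal.ofReal_mul (hf_nonneg θ)]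
    · congr 1
      rw [← withDensity_smul _ (show Measurable fun θ => ENNReal.ofReal ((1 - p θ) / (1 - c)) from
        ((measurable_const.sub hp_meas).div_const (1 - c)).ennreal_ofReal)]
      have : (ENNReal.ofReal (1 - c) • fun θ => ENNReal.ofReal ((1 - p θ) / (1 - c))) =
          fun θ => ENNReal.ofReal (1 - p θ) := by
        funext θ
        simp only [Pi.smul_apply, smul_eq_mul, ← ENNReal.ofReal_mul hc1'.le]
        rw [mul_comm (1 - c), div_mul_cancel₀ _ hc1'.ne']
      rw [this, hmf, ← withDensity_mul _ (hf_meas.ennreal_ofReal)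
        (show Measurable fun θ => ENNReal.ofReal (1 - p θ) from
          (measurable_const.sub hp_meas).ennreal_ofReal)]
      congr 1
      funext θ
      simp [ENNReal.ofReal_mul (hf_nonneg θ)]
  have hac : μ ≪ ν := hμν ▸ withDensity_absolutelyContinuous ν g
  refine ⟨hac, ?_⟩
  -- rnDeriv
  have hrn : μ.rnDeriv ν =ᵐ[ν] g := hμν ▸ Measure.rnDeriv_withDensity ν hg_meas
  have hrnμ : μ.rnDeriv ν =ᵐ[μ] g := hac.ae_le hrn
  -- replace integrand
  set ψ : ((Fin K → ℝ) × Bool) → ℝ :=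
    fun x => if x.2 then Real.log (p x.1 / c) else Real.log ((1 - p x.1) / (1 - c)) with hψ
  have hstep1 : ∫ x, Real.log ((μ.rnDeriv ν x).toReal) ∂μ = ∫ x, ψ x ∂μ := by
    refine integral_congr_ae (hrnμ.mono fun x hx => ?_)
    show Real.log ((μ.rnDeriv ν x).toReal) = ψ x
    rw [hx]
    obtain ⟨θ, b⟩ := x
    cases b
    · show Real.log (ENNReal.ofReal ((1 - p θ) / (1 - c))).toReal =
        Real.log ((1 - p θ) / (1 - c))
      rw [ENNReal.toReal_ofReal (div_nonneg (by have := (hp θ).2; linarith) hc1'.le)]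
    · show Real.log (ENNReal.ofReal (p θ / c)).toReal = Real.log (p θ / c)
      rw [ENNReal.toReal_ofReal (div_nonneg (hp θ).1.le hc0.le)]
  -- integrability of the two pieces
  set g1 : (Fin K → ℝ) → ℝ := fun θ => f θ * (p θ * Real.log (p θ / c)) with hg1def
  set g2 : (Fin K → ℝ) → ℝ :=
    fun θ => f θ * ((1 - p θ) * Real.log ((1 - p θ) / (1 - c))) with hg2def
  set B1 : ℝ := 1 + |Real.log c| with hB1
  set B2 : ℝ := 1 + |Real.log (1 - c)| with hB2
  have hb1 : ∀ θ, -(B1 * f θ) ≤ g1 θ := fun θ => by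
    have h := aux_mul_log_lb (hp θ).1 (hp θ).2.le hc0
    have h2 := mul_le_mul_of_nonneg_left h (hf_nonneg θ)
    rw [hg1def, hB1]; nlinarith
  have hb2 : ∀ θ, -(B2 * f θ) ≤ g2 θ := fun θ => by
    have h := aux_mul_log_lb (x := 1 - p θ) (by linarith [(hp θ).2])
      (by linarith [(hp θ).1]) hc1'
    have h2 := mul_le_mul_of_nonneg_left h (hf_nonneg θ)
    rw [hg2def, hB2]; nlinarith
  have hg1m : Measurable g1 :=
    hf_meas.mul (hp_meas.mul (hp_meas.div_const c).log)
  have hg2m : Measurable g2 :=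
    hf_meas.mul ((measurable_const.sub hp_meas).mul
      ((measurable_const.sub hp_meas).div_const (1 - c)).log)
  have hsum : Integrable (fun θ => g1 θ + g2 θ) :=
    hI.congr (ae_of_all _ fun θ => by rw [hg1def, hg2def]; ring)
  have hmaj : Integrable (fun θ => (g1 θ + g2 θ) + (B1 + B2) * f θ) :=
    hsum.add (hf_int.const_mul (B1 + B2))
  have h1' : Integrable (fun θ => g1 θ + B1 * f θ) := by
    refine hmaj.mono' ((hg1m.add (measurable_const.mul hf_meas)).aestronglyMeasurable)
      (ae_of_all _ fun θ => ?_)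
    have hb := hb1 θ
    have hb' := hb2 θ
    have hfn := hf_nonneg θ
    rw [Real.norm_eq_abs, abs_of_nonneg (by linarith)]
    have hB2n : 0 ≤ B2 := by rw [hB2]; positivity
    nlinarith
  have h2' : Integrable (fun θ => g2 θ + B2 * f θ) := by
    refine hmaj.mono' ((hg2m.add (measurable_const.mul hf_meas)).aestronglyMeasurable)
      (ae_of_all _ fun θ => ?_)
    have hb := hb1 θ
    have hb' := hb2 θ
    have hfn := hf_nonneg θ
    rw [Real.norm_eq_abs, abs_of_nonneg (by linarith)]
    have hB1n : 0 ≤ B1 := by rw [hB1]; positivity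
    nlinarith
  have hg1i : Integrable g1 :=
    (h1'.sub (hf_int.const_mul B1)).congr (ae_of_all _ fun θ => by simp only [Pi.sub_apply, hg1def]; ring)
  have hg2i : Integrable g2 :=
    (h2'.sub (hf_int.const_mul B2)).congr (ae_of_all _ fun θ => by simp only [Pi.sub_apply, hg2def]; ring)
  -- rewrite densities in ℝ≥0 form
  have hd1 : (fun θ => ENNReal.ofReal (f θ * p θ)) =
      fun θ => (((f θ * p θ).toNNReal : ℝ≥0) : ℝ≥0∞) := rfl
  have hd2 : (fun θ => ENNReal.ofReal (f θ * (1 - p θ))) =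
      fun θ => (((f θ * (1 - p θ)).toNNReal : ℝ≥0) : ℝ≥0∞) := rfl
  have hd1m : Measurable fun θ => (f θ * p θ).toNNReal :=
    (hf_meas.mul hp_meas).real_toNNReal
  have hd2m : Measurable fun θ => (f θ * (1 - p θ)).toNNReal :=
    (hf_meas.mul (measurable_const.sub hp_meas)).real_toNNReal
  have hemb : ∀ b : Bool, MeasurableEmbedding (fun θ : Fin K → ℝ => (θ, b)) :=
    fun b => measurableEmbedding_prod_mk_right b
  -- integrability of ψ on each piece
  have int1 : Integrable ψ
      (Measure.map (fun θ => (θ, true))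
        (volume.withDensity fun θ => ENNReal.ofReal (f θ * p θ))) := by
    rw [(hemb true).integrable_map_iff, hd1,
      integrable_withDensity_iff_integrable_smul hd1m]
    refine hg1i.congr (ae_of_all _ fun θ => ?_)
    show g1 θ = (f θ * p θ).toNNReal • Real.log (p θ / c)
    rw [NNReal.smul_def, Real.coe_toNNReal _ (mul_nonneg (hf_nonneg θ) (hp θ).1.le),
      hg1def, smul_eq_mul]
    ring
  have int2 : Integrable ψ
      (Measure.map (fun θ => (θ, false))
        (volume.withDensity fun θ => ENNReal.ofReal (f θ * (1 - p θ)))) := by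
    rw [(hemb false).integrable_map_iff, hd2,
      integrable_withDensity_iff_integrable_smul hd2m]
    refine hg2i.congr (ae_of_all _ fun θ => ?_)
    show g2 θ = (f θ * (1 - p θ)).toNNReal • Real.log ((1 - p θ) / (1 - c))
    rw [NNReal.smul_def, Real.coe_toNNReal _
      (mul_nonneg (hf_nonneg θ) (by linarith [(hp θ).2])), hg2def, smul_eq_mul]
    ring
  -- compute the integral
  rw [hstep1, hμ, integral_add_measure int1 int2,
    (hemb true).integral_map, (hemb false).integral_map]
  have e1 : ∫ θ, ψ (θ, true) ∂(volume.withDensity fun θ => ENNReal.ofReal (f θ * p θ)) =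
      ∫ θ, g1 θ := by
    rw [hd1, integral_withDensity_eq_integral_smul hd1m]
    refine integral_congr_ae (ae_of_all _ fun θ => ?_)
    show (f θ * p θ).toNNReal • Real.log (p θ / c) = g1 θ
    rw [NNReal.smul_def, Real.coe_toNNReal _ (mul_nonneg (hf_nonneg θ) (hp θ).1.le),
      hg1def, smul_eq_mul]
    ring
  have e2 : ∫ θ, ψ (θ, false)
        ∂(volume.withDensity fun θ => ENNReal.ofReal (f θ * (1 - p θ))) =
      ∫ θ, g2 θ := by
    rw [hd2, integral_withDensity_eq_integral_smul hd2m]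
    refine integral_congr_ae (ae_of_all _ fun θ => ?_)
    show (f θ * (1 - p θ)).toNNReal • Real.log ((1 - p θ) / (1 - c)) = g2 θ
    rw [NNReal.smul_def, Real.coe_toNNReal _
      (mul_nonneg (hf_nonneg θ) (by linarith [(hp θ).2])), hg2def, smul_eq_mul]
    ring
  rw [e1, e2, ← integral_add hg1i hg2i]
  refine integral_congr_ae (ae_of_all _ fun θ => ?_)
  rw [hg1def, hg2def]
  ring
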